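/- arXiv:2505.04539 — 2 statements merged into one kernel-verified Lean document; each statement's English description precedes it below -/
import Mathlib

section
/- Let M=(S,A,P) be an RMDP and T ⊆ S a target set. For every state s ∈ S: s ∈ PAttr_E(M,T) if and only if there exists a pure memoryless environment policy ρ such that for all agent policies σ we have ℙ^{σ,ρ}_M(s)[Reach(T)] > 0. -/
open scoped BigOperators Classical

/-- A robust MDP over finite state set `S` and finite action set `A`.
Distributions are represented as real-valued probability vectors `S → ℝ`. -/
structure RMDP (S A : Type) [Fintype S] [Fintype A] where
  /-- available actions at each state -/
  Act : S → Finset A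
  Act_nonempty : ∀ s, (Act s).Nonempty
  /-- the uncertainty sets -/
  P : S → A → Set (S → ℝ)
  P_prob : ∀ s, ∀ a ∈ Act s, ∀ p ∈ P s a, (∀ t, 0 ≤ p t) ∧ ∑ t, p t = 1
  P_nonempty : ∀ s, ∀ a ∈ Act s, (P s a).Nonempty
  P_compact : ∀ s, ∀ a ∈ Act s, IsCompact (P s a)

variable {S A : Type} [Fintype S] [Nonempty S] [Fintype A]

/-- An agent policy: given a history and the current state, a probability
distribution over the available actions. -/
structure AgentPolicy (M : RMDP S A) where
  toFun : List (S × A) → S → A → ℝ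
  nonneg : ∀ h s a, 0 ≤ toFun h s a
  sum_one : ∀ h s, ∑ a, toFun h s a = 1
  mem_act : ∀ h s a, toFun h s a ≠ 0 → a ∈ M.Act s

/-- An environment policy: given a history, the current state and the chosen
action, a distribution from the uncertainty set. -/
structure EnvPolicy (M : RMDP S A) where
  toFun : List (S × A) → S → A → S → ℝ
  mem : ∀ h s, ∀ a ∈ M.Act s, toFun h s a ∈ M.P s a

/-- A pure memoryless agent policy deterministically picks an action
depending only on the current state. -/
def AgentPolicy.PureMemoryless {M : RMDP S A} (σ : AgentPolicy M) : Prop :=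
  ∃ f : S → A, ∀ h s a, σ.toFun h s a = if a = f s then 1 else 0

/-- A pure memoryless environment policy picks the transition distribution
depending only on the current state and action. -/
def EnvPolicy.PureMemoryless {M : RMDP S A} (ρ : EnvPolicy M) : Prop :=
  ∃ g : S → A → S → ℝ, ∀ h s a, ρ.toFun h s a = g s a

/-- Probability, under policies `σ, ρ`, of reaching the target `T` within `k`
steps, starting from state `s` with history `h`. -/
noncomputable def reachK (M : RMDP S A) (σ : AgentPolicy M) (ρ : EnvPolicy M) (T : Set S) :
    ℕ → List (S × A) → S → ℝ
  | 0, _, s => if s ∈ T then 1 else 0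
  | k + 1, h, s =>
      if s ∈ T then 1
      else ∑ a, σ.toFun h s a * ∑ t, ρ.toFun h s a t * reachK M σ ρ T k (h ++ [(s, a)]) t

/-- `ℙ^{σ,ρ}_M(s)[Reach(T)]`: the probability of eventually reaching `T`,
which is the supremum over `k` of the probabilities of reaching `T` within `k` steps. -/
noncomputable def reachProb (M : RMDP S A) (σ : AgentPolicy M) (ρ : EnvPolicy M)
    (T : Set S) (s : S) : ℝ :=
  ⨆ k : ℕ, reachK M σ ρ T k [] s

/-- `Val^{s,σ}_M(Reach(T)) = inf_ρ ℙ^{σ,ρ}_M(s)[Reach(T)]`. -/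
noncomputable def reachVal (M : RMDP S A) (σ : AgentPolicy M) (T : Set S) (s : S) : ℝ :=
  ⨅ ρ : EnvPolicy M, reachProb M σ ρ T s

/-- `Val^{s}_M(Reach(T)) = sup_σ inf_ρ ℙ^{σ,ρ}_M(s)[Reach(T)]`. -/
noncomputable def reachValSup (M : RMDP S A) (T : Set S) (s : S) : ℝ :=
  ⨆ σ : AgentPolicy M, reachVal M σ T s

/-- `force_A(s,B)`: the agent has an action that reaches `B` with positive
probability no matter which distribution the environment picks. -/
def forceA (M : RMDP S A) (s : S) (B : Set S) : Prop :=
  ∃ a ∈ M.Act s, ∀ p ∈ M.P s a, 0 < ∑ t, B.indicator p t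

/-- `force_E(s,B)`: whatever action the agent picks, the environment can pick a
distribution reaching `B` with positive probability. -/
def forceE (M : RMDP S A) (s : S) (B : Set S) : Prop :=
  ∀ a ∈ M.Act s, ∃ p ∈ M.P s a, 0 < ∑ t, B.indicator p t

/-- The increasing sequence `T₀ = T`, `T_{i+1} = T_i ∪ {s | force_A(s, T_i)}`. -/
def attrSeqA (M : RMDP S A) (T : Set S) : ℕ → Set S
  | 0 => T
  | i + 1 => attrSeqA M T i ∪ {s | forceA M s (attrSeqA M T i)}

/-- The positive attractor of the agent. -/
def PAttrA (M : RMDP S A) (T : Set S) : Set S := ⋃ i, attrSeqA M T i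

/-- The increasing sequence `T₀ = T`, `T_{i+1} = T_i ∪ {s | force_E(s, T_i)}`. -/
def attrSeqE (M : RMDP S A) (T : Set S) : ℕ → Set S
  | 0 => T
  | i + 1 => attrSeqE M T i ∪ {s | forceE M s (attrSeqE M T i)}

/-- The positive attractor of the environment. -/
def PAttrE (M : RMDP S A) (T : Set S) : Set S := ⋃ i, attrSeqE M T i


section Aux

variable (M : RMDP S A) (T : Set S)

lemma envpol_nonneg (ρ : EnvPolicy M) (h : List (S × A)) (s : S) {a : A}
    (ha : a ∈ M.Act s) (t : S) : 0 ≤ ρ.toFun h s a t :=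
  (M.P_prob s a ha _ (ρ.mem h s a ha)).1 t

lemma envpol_sum (ρ : EnvPolicy M) (h : List (S × A)) (s : S) {a : A}
    (ha : a ∈ M.Act s) : ∑ t, ρ.toFun h s a t = 1 :=
  (M.P_prob s a ha _ (ρ.mem h s a ha)).2

lemma reachK_nonneg (σ : AgentPolicy M) (ρ : EnvPolicy M) :
    ∀ k h s, 0 ≤ reachK M σ ρ T k h s := by
  intro k
  induction k with
  | zero =>
    intro h s; simp only [reachK]; split <;> norm_num
  | succ k ih =>
    intro h s
    by_cases hs : s ∈ T
    · simp [reachK, hs]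
    · simp only [reachK, hs, if_false]
      apply Finset.sum_nonneg
      intro a _
      by_cases hσ : σ.toFun h s a = 0
      · simp [hσ]
      · refine mul_nonneg (σ.nonneg _ _ _) (Finset.sum_nonneg fun t _ => ?_)
        exact mul_nonneg (envpol_nonneg M ρ h s (σ.mem_act h s a hσ) t) (ih _ t)

lemma reachK_le_one (σ : AgentPolicy M) (ρ : EnvPolicy M) :
    ∀ k h s, reachK M σ ρ T k h s ≤ 1 := by
  intro k
  induction k with
  | zero =>
    intro h s; simp only [reachK]; split <;> norm_num
  | succ k ih =>
    intro h s
    by_cases hs : s ∈ T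
    · simp [reachK, hs]
    · simp only [reachK, hs, if_false]
      calc ∑ a, σ.toFun h s a * ∑ t, ρ.toFun h s a t * reachK M σ ρ T k (h ++ [(s, a)]) t
          ≤ ∑ a, σ.toFun h s a * 1 := by
            apply Finset.sum_le_sum
            intro a _
            by_cases hσ : σ.toFun h s a = 0
            · simp [hσ]
            · have ha := σ.mem_act h s a hσ
              apply mul_le_mul_of_nonneg_left _ (σ.nonneg _ _ _)
              calc ∑ t, ρ.toFun h s a t * reachK M σ ρ T k (h ++ [(s, a)]) t
                  ≤ ∑ t, ρ.toFun h s a t * 1 := by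
                    apply Finset.sum_le_sum
                    intro t _
                    exact mul_le_mul_of_nonneg_left (ih _ t) (envpol_nonneg M ρ h s ha t)
                _ = 1 := by simp [envpol_sum M ρ h s ha]
        _ = 1 := by simp [σ.sum_one h s]

lemma reachK_le_succ (σ : AgentPolicy M) (ρ : EnvPolicy M) :
    ∀ k h s, reachK M σ ρ T k h s ≤ reachK M σ ρ T (k + 1) h s := by
  intro k
  induction k with
  | zero =>
    intro h s
    by_cases hs : s ∈ T
    · simp [reachK, hs]
    · have h0 : reachK M σ ρ T 0 h s = 0 := by simp [reachK, hs]
      rw [h0]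
      exact reachK_nonneg M T σ ρ 1 h s
  | succ k ih =>
    intro h s
    by_cases hs : s ∈ T
    · simp [reachK, hs]
    · simp only [reachK, hs, if_false]
      apply Finset.sum_le_sum
      intro a _
      by_cases hσ : σ.toFun h s a = 0
      · simp [hσ]
      · have ha := σ.mem_act h s a hσ
        apply mul_le_mul_of_nonneg_left _ (σ.nonneg _ _ _)
        apply Finset.sum_le_sum
        intro t _
        exact mul_le_mul_of_nonneg_left (ih _ t) (envpol_nonneg M ρ h s ha t)

lemma attrSeqE_mono : Monotone (attrSeqE M T) :=
  monotone_nat_of_le_succ fun _ => Set.subset_union_left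

lemma subset_PAttrE (i : ℕ) : attrSeqE M T i ⊆ PAttrE M T :=
  Set.subset_iUnion (attrSeqE M T) i

/-- the rank of a state in the attractor -/
noncomputable def rkE (s : S) : ℕ :=
  if h : ∃ i, s ∈ attrSeqE M T i then Nat.find h else 0

/-- the pure memoryless environment transition function used in the
forward direction -/
noncomputable def gEnv (s : S) (a : A) : S → ℝ :=
  if ha : a ∈ M.Act s then
    if hf : ∃ p ∈ M.P s a, 0 < ∑ t, (attrSeqE M T (rkE M T s - 1)).indicator p t then
      hf.choose
    else (M.P_nonempty s a ha).choose
  else fun _ => 0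

lemma gEnv_mem {s : S} {a : A} (ha : a ∈ M.Act s) : gEnv M T s a ∈ M.P s a := by
  unfold gEnv
  rw [dif_pos ha]
  split
  · rename_i hf
    exact hf.choose_spec.1
  · exact (M.P_nonempty s a ha).choose_spec

lemma gEnv_spec {s : S} {a : A} (ha : a ∈ M.Act s)
    (hf : ∃ p ∈ M.P s a, 0 < ∑ t, (attrSeqE M T (rkE M T s - 1)).indicator p t) :
    0 < ∑ t, (attrSeqE M T (rkE M T s - 1)).indicator (gEnv M T s a) t := by
  unfold gEnv
  rw [dif_pos ha, dif_pos hf]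
  exact hf.choose_spec.2

/-- the pure memoryless environment policy used in the forward direction -/
noncomputable def ρE : EnvPolicy M :=
  ⟨fun _ s a => gEnv M T s a, fun _ s a ha => gEnv_mem M T ha⟩

lemma reachK_pos_of_attr :
    ∀ i s, s ∈ attrSeqE M T i → ∀ σ : AgentPolicy M, ∀ h,
      0 < reachK M σ (ρE M T) T i h s := by
  intro i
  induction i with
  | zero =>
    intro s hs σ h
    simp only [attrSeqE] at hs
    simp [reachK, hs]
  | succ i ih =>
    intro s hs σ h
    by_cases hsT : s ∈ T
    · simp [reachK, hsT]
    by_cases hsi : s ∈ attrSeqE M T i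
    · exact lt_of_lt_of_le (ih s hsi σ h) (reachK_le_succ M T σ _ i h s)
    -- s has rank exactly i+1
    have hforce : forceE M s (attrSeqE M T i) := by
      rcases hs with hs | hs
      · exact absurd hs hsi
      · exact hs
    have hex : ∃ j, s ∈ attrSeqE M T j := ⟨i + 1, hs⟩
    have hrk : rkE M T s = i + 1 := by
      unfold rkE
      rw [dif_pos hex]
      rw [Nat.find_eq_iff]
      refine ⟨hs, fun j hj hsj => ?_⟩
      exact hsi (attrSeqE_mono M T (Nat.lt_succ_iff.mp hj) hsj)
    have hrk1 : rkE M T s - 1 = i := by omega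
    -- pick an action with positive probability
    have hexa : ∃ a, σ.toFun h s a ≠ 0 := by
      by_contra hc
      push_neg at hc
      have := σ.sum_one h s
      simp only [hc] at this
      simp at this
    obtain ⟨a₀, ha₀⟩ := hexa
    have ha₀σ : 0 < σ.toFun h s a₀ := lt_of_le_of_ne (σ.nonneg h s a₀) (Ne.symm ha₀)
    have ha₀A : a₀ ∈ M.Act s := σ.mem_act h s a₀ ha₀
    have hf : ∃ p ∈ M.P s a₀, 0 < ∑ t, (attrSeqE M T (rkE M T s - 1)).indicator p t := by
      rw [hrk1]
      exact hforce a₀ ha₀A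
    have hg := gEnv_spec M T ha₀A hf
    rw [hrk1] at hg
    have hgP : gEnv M T s a₀ ∈ M.P s a₀ := gEnv_mem M T ha₀A
    have hgnn : ∀ t, 0 ≤ gEnv M T s a₀ t := (M.P_prob s a₀ ha₀A _ hgP).1
    -- find a witness state
    have hext : ∃ t, 0 < (attrSeqE M T i).indicator (gEnv M T s a₀) t := by
      by_contra hc
      push_neg at hc
      have : ∑ t, (attrSeqE M T i).indicator (gEnv M T s a₀) t ≤ 0 :=
        Finset.sum_nonpos fun t _ => hc t
      linarith
    obtain ⟨t₀, ht₀⟩ := hext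
    have ht₀mem : t₀ ∈ attrSeqE M T i := by
      by_contra hc
      simp [Set.indicator_of_notMem hc] at ht₀
    have ht₀pos : 0 < gEnv M T s a₀ t₀ := by
      rwa [Set.indicator_of_mem ht₀mem] at ht₀
    -- assemble
    simp only [reachK, hsT, if_false]
    have hinner : ∀ a ∈ Finset.univ (α := A), 0 ≤ σ.toFun h s a *
        ∑ t, (ρE M T).toFun h s a t * reachK M σ (ρE M T) T i (h ++ [(s, a)]) t := by
      intro a _
      by_cases hσ : σ.toFun h s a = 0
      · simp [hσ]
      · refine mul_nonneg (σ.nonneg _ _ _) (Finset.sum_nonneg fun t _ => ?_)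
        exact mul_nonneg (envpol_nonneg M _ h s (σ.mem_act h s a hσ) t)
          (reachK_nonneg M T σ _ i _ t)
    apply Finset.sum_pos' hinner
    refine ⟨a₀, Finset.mem_univ a₀, ?_⟩
    apply mul_pos ha₀σ
    have hinner2 : ∀ t ∈ Finset.univ (α := S), 0 ≤ (ρE M T).toFun h s a₀ t *
        reachK M σ (ρE M T) T i (h ++ [(s, a₀)]) t := by
      intro t _
      exact mul_nonneg (envpol_nonneg M _ h s ha₀A t) (reachK_nonneg M T σ _ i _ t)
    apply Finset.sum_pos' hinner2
    refine ⟨t₀, Finset.mem_univ t₀, ?_⟩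
    exact mul_pos ht₀pos (ih t₀ ht₀mem σ (h ++ [(s, a₀)]))

lemma attrSeqE_stab : ∃ N, attrSeqE M T (N + 1) = attrSeqE M T N ∧
    PAttrE M T = attrSeqE M T N := by
  have hb : ∀ i, (attrSeqE M T i).ncard ≤ Fintype.card S := by
    intro i
    calc (attrSeqE M T i).ncard ≤ (Set.univ : Set S).ncard :=
          Set.ncard_le_ncard (Set.subset_univ _) Set.finite_univ
      _ = Fintype.card S := by rw [Set.ncard_univ, Nat.card_eq_fintype_card]
  have hN : ∃ N, attrSeqE M T (N + 1) = attrSeqE M T N := by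
    by_contra hc
    push_neg at hc
    have hs : StrictMono fun i => (attrSeqE M T i).ncard := by
      apply strictMono_nat_of_lt_succ
      intro n
      apply Set.ncard_lt_ncard _ (Set.toFinite _)
      exact HasSubset.Subset.ssubset_of_ne Set.subset_union_left fun he => hc n he.symm
    have h1 : Fintype.card S + 1 ≤ (attrSeqE M T (Fintype.card S + 1)).ncard :=
      hs.le_apply
    have h2 := hb (Fintype.card S + 1)
    omega
  obtain ⟨N, hNeq⟩ := hN
  have hconst : ∀ j, attrSeqE M T (N + j) = attrSeqE M T N := by
    intro j
    induction j with
    | zero => rfl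
    | succ j ihj =>
      show attrSeqE M T (N + j + 1) = attrSeqE M T N
      have : attrSeqE M T (N + j + 1) =
          attrSeqE M T (N + j) ∪ {s | forceE M s (attrSeqE M T (N + j))} := rfl
      rw [this, ihj]
      exact hNeq
  refine ⟨N, hNeq, ?_⟩
  apply le_antisymm
  · apply Set.iUnion_subset
    intro i
    calc attrSeqE M T i ⊆ attrSeqE M T (N + i) := attrSeqE_mono M T (by omega)
      _ = attrSeqE M T N := hconst i
  · exact subset_PAttrE M T N

end Aux

theorem stmt1 (M : RMDP S A) (T : Set S) (s : S) :
    s ∈ PAttrE M T ↔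
      ∃ ρ : EnvPolicy M, ρ.PureMemoryless ∧
        ∀ σ : AgentPolicy M, 0 < reachProb M σ ρ T s := by
  constructor
  · -- forward direction
    intro hs
    obtain ⟨_, ⟨i, rfl⟩, hsi⟩ := hs
    refine ⟨ρE M T, ⟨gEnv M T, fun _ _ _ => rfl⟩, fun σ => ?_⟩
    have hpos := reachK_pos_of_attr M T i s hsi σ []
    have hbdd : BddAbove (Set.range fun k => reachK M σ (ρE M T) T k [] s) := by
      refine ⟨1, ?_⟩
      rintro x ⟨k, rfl⟩
      exact reachK_le_one M T σ _ k [] s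
    exact lt_of_lt_of_le hpos (le_ciSup hbdd i)
  · -- backward direction
    rintro ⟨ρ, ⟨g, hg⟩, hρ⟩
    by_contra hsP
    obtain ⟨N, hNeq, hNP⟩ := attrSeqE_stab M T
    -- key : for every state outside the attractor there is a safe action
    have key : ∀ u, u ∉ PAttrE M T → ∃ a ∈ M.Act u,
        ∀ p ∈ M.P u a, ∀ t ∈ PAttrE M T, p t = 0 := by
      intro u hu
      have hforce : ¬ forceE M u (attrSeqE M T N) := by
        intro hf
        apply hu
        rw [hNP, ← hNeq]
        exact Set.mem_union_right _ hf
      unfold forceE at hforce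
      push_neg at hforce
      obtain ⟨a, haA, hap⟩ := hforce
      refine ⟨a, haA, fun p hp t ht => ?_⟩
      have hple := hap p hp
      have hnn : ∀ t, 0 ≤ p t := (M.P_prob u a haA p hp).1
      have hzero : ∑ t, (attrSeqE M T N).indicator p t = 0 := by
        have h1 : 0 ≤ ∑ t, (attrSeqE M T N).indicator p t :=
          Finset.sum_nonneg fun t _ => Set.indicator_nonneg (fun x _ => hnn x) t
        linarith
      have := (Finset.sum_eq_zero_iff_of_nonneg
        (fun t _ => Set.indicator_nonneg (fun x _ => hnn x) t)).mp hzero t (Finset.mem_univ t)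
      rw [hNP] at ht
      rwa [Set.indicator_of_mem ht p] at this
    -- the agent policy avoiding the attractor
    have hact : ∀ u, (if h : u ∉ PAttrE M T then (key u h).choose
        else (M.Act_nonempty u).choose) ∈ M.Act u := by
      intro u
      split
      · rename_i h
        exact (key u h).choose_spec.1
      · exact (M.Act_nonempty u).choose_spec
    set f : S → A := fun u => if h : u ∉ PAttrE M T then (key u h).choose
      else (M.Act_nonempty u).choose with hf
    let σ0 : AgentPolicy M :=
      { toFun := fun _ u a => if a = f u then 1 else 0
        nonneg := by intro h u a; split <;> norm_num
        sum_one := by intro h u; simp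
        mem_act := by
          intro h u a ha
          have : a = f u := by by_contra hc; simp [hc] at ha
          rw [this]; exact hact u }
    -- show the reach probability is zero
    have hzeroK : ∀ k h u, u ∉ PAttrE M T → reachK M σ0 ρ T k h u = 0 := by
      intro k
      induction k with
      | zero =>
        intro h u hu
        have huT : u ∉ T := fun hT => hu (subset_PAttrE M T 0 hT)
        simp [reachK, huT]
      | succ k ihk =>
        intro h u hu
        have huT : u ∉ T := fun hT => hu (subset_PAttrE M T 0 hT)
        simp only [reachK, huT, if_false]
        apply Finset.sum_eq_zero
        intro a _
        by_cases hafu : a = f u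
        · subst hafu
          have hfu : f u = (key u hu).choose := by rw [hf]; simp [hu]
          have hspec := (key u hu).choose_spec
          have hmemP : ρ.toFun h u (f u) ∈ M.P u (f u) := ρ.mem h u (f u) (hact u)
          rw [hfu] at hmemP ⊢
          have hinner : ∑ t, ρ.toFun h u (key u hu).choose t *
              reachK M σ0 ρ T k (h ++ [(u, (key u hu).choose)]) t = 0 := by
            apply Finset.sum_eq_zero
            intro t _
            by_cases htP : t ∈ PAttrE M T
            · rw [hspec.2 _ hmemP t htP, zero_mul]
            · rw [ihk _ t htP, mul_zero]
          rw [hinner, mul_zero]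
        · simp [hafu, σ0]
    have hrp : reachProb M σ0 ρ T s = 0 := by
      unfold reachProb
      have : ∀ k : ℕ, reachK M σ0 ρ T k [] s = 0 := fun k => hzeroK k [] s hsP
      simp only [this]
      exact ciSup_const
    have := hρ σ0
    rw [hrp] at this
    exact lt_irrefl 0 this
end

section
/- Let M=(S,A,P) be an RMDP, T ⊆ S, and let p_A > 0 be a constant such that for all s ∈ S and B ⊆ S for which force_A(s,B) holds, there is an action a ∈ A(s) with δ[B] ≥ p_A for every δ ∈ P(s,a). Let T₀ = T and T_{i+1} = T_i ∪ {s ∈ S : force_A(s,T_i)}. Then for every i ∈ ℕ and every s ∈ T_i there exists a pure memoryless agent policy σ with Val^{s,σ}_M(Reach(T)) ≥ p_A^i. -/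
open scoped BigOperators Classical

variable {S A : Type} [Fintype S] [Nonempty S] [Fintype A]

lemma attr_mono (M : RMDP S A) (T : Set S) : Monotone (attrSeqA M T) := by
  apply monotone_nat_of_le_succ
  intro n
  exact Set.subset_union_left

lemma env_nonempty (M : RMDP S A) : Nonempty (EnvPolicy M) := by
  classical
  refine ⟨⟨fun _ s a => if h : a ∈ M.Act s then (M.P_nonempty s a h).choose else fun _ => 0,
    ?_⟩⟩
  intro h s a ha
  simp only [dif_pos ha]
  exact (M.P_nonempty s a ha).choose_spec


theorem stmt3 (M : RMDP S A) (T : Set S) (pA : ℝ) (hpA : 0 < pA)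
    (hforce : ∀ (s : S) (B : Set S), forceA M s B →
      ∃ a ∈ M.Act s, ∀ p ∈ M.P s a, pA ≤ ∑ t, B.indicator p t)
    (i : ℕ) (s : S) (hs : s ∈ attrSeqA M T i) :
    ∃ σ : AgentPolicy M, σ.PureMemoryless ∧ pA ^ i ≤ reachVal M σ T s := by
  classical
  -- pA ≤ 1
  have hpA1 : pA ≤ 1 := by
    obtain ⟨s0⟩ := (inferInstance : Nonempty S)
    obtain ⟨a0, ha0⟩ := M.Act_nonempty s0
    have hf : forceA M s0 Set.univ := by
      refine ⟨a0, ha0, fun p hp => ?_⟩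
      have hpr := M.P_prob s0 a0 ha0 p hp
      simp [Set.indicator_univ, hpr.2]
    obtain ⟨a, ha, hle⟩ := hforce s0 Set.univ hf
    obtain ⟨p, hp⟩ := M.P_nonempty s0 a ha
    have := hle p hp
    have hpr := M.P_prob s0 a ha p hp
    simpa [Set.indicator_univ, hpr.2] using this
  -- choose actions
  have hfex : ∀ s : S, ∃ a, a ∈ M.Act s ∧ ∀ j, s ∉ attrSeqA M T j →
      s ∈ attrSeqA M T (j+1) → ∀ p ∈ M.P s a, pA ≤ ∑ t, (attrSeqA M T j).indicator p t := by
    intro s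
    by_cases hE : ∃ j, s ∉ attrSeqA M T j ∧ s ∈ attrSeqA M T (j+1)
    · obtain ⟨j, hj1, hj2⟩ := hE
      have hfA : forceA M s (attrSeqA M T j) := by
        rcases hj2 with h | h
        · exact absurd h hj1
        · exact h
      obtain ⟨a, ha, hle⟩ := hforce s _ hfA
      refine ⟨a, ha, fun j' hj1' hj2' p hp => ?_⟩
      have hjj : j' = j := by
        by_contra hne
        rcases lt_or_gt_of_ne hne with h | h
        · exact hj1 (attr_mono M T (Nat.succ_le_of_lt h) hj2')
        · exact hj1' (attr_mono M T (Nat.succ_le_of_lt h) hj2)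
      subst hjj
      exact hle p hp
    · obtain ⟨a, ha⟩ := M.Act_nonempty s
      exact ⟨a, ha, fun j hj1 hj2 => absurd ⟨j, hj1, hj2⟩ hE⟩
  set f : S → A := fun s => (hfex s).choose with hfdef
  have hfAct : ∀ s, f s ∈ M.Act s := fun s => (hfex s).choose_spec.1
  have hfspec : ∀ s j, s ∉ attrSeqA M T j → s ∈ attrSeqA M T (j+1) →
      ∀ p ∈ M.P s (f s), pA ≤ ∑ t, (attrSeqA M T j).indicator p t :=
    fun s => (hfex s).choose_spec.2
  -- the policy
  refine ⟨⟨fun _ s a => if a = f s then 1 else 0, ?_, ?_, ?_⟩, ⟨f, fun _ _ _ => rfl⟩, ?_⟩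
  · intro h s a; split <;> norm_num
  · intro h s; simp
  · intro h s a hne
    by_cases hfs : a = f s
    · subst hfs; exact hfAct s
    · simp [hfs] at hne
  set σ : AgentPolicy M := ⟨fun _ s a => if a = f s then 1 else 0, _, _, _⟩ with hσdef
  have := env_nonempty M
  -- per environment policy bounds
  have key : ∀ ρ : EnvPolicy M,
      (∀ k h s, 0 ≤ reachK M σ ρ T k h s ∧ reachK M σ ρ T k h s ≤ 1) ∧
      (∀ j h s, s ∈ attrSeqA M T j → pA ^ j ≤ reachK M σ ρ T j h s) := by
    intro ρ
    have hstep : ∀ k h s, s ∉ T → reachK M σ ρ T (k+1) h s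
        = ∑ t, ρ.toFun h s (f s) t * reachK M σ ρ T k (h ++ [(s, f s)]) t := by
      intro k h s hsT
      have : ∀ a : A, σ.toFun h s a * (∑ t, ρ.toFun h s a t * reachK M σ ρ T k (h ++ [(s, a)]) t)
          = if a = f s then ∑ t, ρ.toFun h s (f s) t * reachK M σ ρ T k (h ++ [(s, f s)]) t
            else 0 := by
        intro a
        by_cases hfs : a = f s
        · subst hfs; simp [hσdef]
        · simp [hσdef, hfs]
      simp only [reachK, if_neg hsT]
      rw [Finset.sum_congr rfl (fun a _ => this a), Finset.sum_ite_eq' Finset.univ (f s)]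
      simp
    have hbound : ∀ k h s, 0 ≤ reachK M σ ρ T k h s ∧ reachK M σ ρ T k h s ≤ 1 := by
      intro k
      induction k with
      | zero => intro h s; constructor <;> simp [reachK] <;> split <;> norm_num
      | succ k ih =>
        intro h s
        by_cases hsT : s ∈ T
        · simp [reachK, hsT]
        · rw [hstep k h s hsT]
          have hmem := ρ.mem h s (f s) (hfAct s)
          have hpr := M.P_prob s (f s) (hfAct s) _ hmem
          constructor
          · apply Finset.sum_nonneg
            intro t _
            exact mul_nonneg (hpr.1 t) (ih _ t).1
          · calc ∑ t, ρ.toFun h s (f s) t * reachK M σ ρ T k (h ++ [(s, f s)]) t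
                ≤ ∑ t, ρ.toFun h s (f s) t * 1 := by
                  apply Finset.sum_le_sum
                  intro t _
                  exact mul_le_mul_of_nonneg_left (ih _ t).2 (hpr.1 t)
            _ = 1 := by simp [hpr.2]
    refine ⟨hbound, ?_⟩
    intro j
    induction j with
    | zero => intro h s hs; simp [reachK, (show s ∈ T from hs)]
    | succ j ih =>
      intro h s hs
      by_cases hsT : s ∈ T
      · have : reachK M σ ρ T (j+1) h s = 1 := by simp [reachK, hsT]
        rw [this]
        exact pow_le_one₀ hpA.le hpA1
      · -- find the minimal level
        have hEx : ∃ n, s ∈ attrSeqA M T n := ⟨j+1, hs⟩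
        have hmmem : s ∈ attrSeqA M T (Nat.find hEx) := Nat.find_spec hEx
        have hmle : Nat.find hEx ≤ j + 1 := Nat.find_min' hEx hs
        have hm1 : 1 ≤ Nat.find hEx := by
          rcases Nat.eq_zero_or_pos (Nat.find hEx) with h0 | h1
          · rw [h0] at hmmem; exact absurd hmmem hsT
          · exact h1
        obtain ⟨j0, hmeq⟩ : ∃ j0, Nat.find hEx = j0 + 1 :=
          ⟨Nat.find hEx - 1, (Nat.succ_pred_eq_of_pos hm1).symm⟩
        rw [hmeq] at hmmem hmle
        have hj0 : j0 ≤ j := Nat.lt_succ_iff.mp hmle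
        have hnot : s ∉ attrSeqA M T j0 := Nat.find_min hEx (by omega)
        have hspec := hfspec s j0 hnot hmmem
        rw [hstep j h s hsT]
        have hmem := ρ.mem h s (f s) (hfAct s)
        have hpr := M.P_prob s (f s) (hfAct s) _ hmem
        have hge : ∀ t, (attrSeqA M T j0).indicator (ρ.toFun h s (f s)) t * pA ^ j
            ≤ ρ.toFun h s (f s) t * reachK M σ ρ T j (h ++ [(s, f s)]) t := by
          intro t
          by_cases ht : t ∈ attrSeqA M T j0
          · rw [Set.indicator_of_mem ht]
            exact mul_le_mul_of_nonneg_left (ih _ t (attr_mono M T hj0 ht)) (hpr.1 t)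
          · rw [Set.indicator_of_notMem ht]
            simp only [zero_mul]
            exact mul_nonneg (hpr.1 t) (hbound j _ t).1
        calc pA ^ (j + 1) = pA * pA ^ j := by ring
          _ ≤ (∑ t, (attrSeqA M T j0).indicator (ρ.toFun h s (f s)) t) * pA ^ j := by
              apply mul_le_mul_of_nonneg_right (hspec _ hmem) (pow_nonneg hpA.le j)
          _ = ∑ t, (attrSeqA M T j0).indicator (ρ.toFun h s (f s)) t * pA ^ j := by
              rw [Finset.sum_mul]
          _ ≤ _ := Finset.sum_le_sum (fun t _ => hge t)
  -- conclude
  unfold reachVal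
  apply le_ciInf
  intro ρ
  unfold reachProb
  have hBdd : BddAbove (Set.range fun k => reachK M σ ρ T k [] s) := by
    refine ⟨1, ?_⟩
    rintro x ⟨k, rfl⟩
    exact ((key ρ).1 k [] s).2
  calc pA ^ i ≤ reachK M σ ρ T i [] s := (key ρ).2 i [] s hs
    _ ≤ _ := le_ciSup hBdd i
end
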